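/- Let (b_k)_{k≥1} be a strictly increasing sequence of positive integers and let ε > 0. Then for almost every real number x, ∑_{k=1}^N cos(2π b_k x) = O(N^{1/2+ε}) as N → ∞. -/

import Mathlib

open MeasureTheory Filter Finset Real Asymptotics intervalIntegral


lemma integral_cos_int (n : ℤ) (hn : n ≠ 0) :
    ∫ x in (0:ℝ)..1, Real.cos (2 * π * n * x) = 0 := by
  have hc : (2 * π * n : ℝ) ≠ 0 := by
    have := Real.pi_ne_zero
    have : (n:ℝ) ≠ 0 := Int.cast_ne_zero.mpr hn
    positivity
  have h1 : (∫ x in (0:ℝ)..1, Real.cos (2 * π * n * x))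
      = (2*π*n : ℝ)⁻¹ • ∫ x in (2*π*n*(0:ℝ))..(2*π*n*1), Real.cos x :=
    intervalIntegral.integral_comp_mul_left Real.cos hc
  rw [h1, integral_cos]
  have : Real.sin (2*π*n*1) = 0 := by
    have := Real.sin_int_mul_pi (2*n)
    rw [show ((2*n : ℤ):ℝ) * π = 2*π*n*1 by push_cast; ring] at this
    exact this
  rw [mul_one] at this
  simp [this, hn]

lemma integral_cos_int' (n : ℤ) :
    ∫ x in (0:ℝ)..1, Real.cos (2 * π * n * x) = if n = 0 then 1 else 0 := by
  split_ifs with h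
  · simp [h]
  · exact integral_cos_int n h

lemma integral_cos_mul_cos (p q : ℕ) (hp : 1 ≤ p) (hq : 1 ≤ q) :
    ∫ x in (0:ℝ)..1, Real.cos (2 * π * p * x) * Real.cos (2 * π * q * x)
      = if p = q then 1/2 else 0 := by
  have key : ∀ x : ℝ, Real.cos (2 * π * p * x) * Real.cos (2 * π * q * x)
      = (Real.cos (2 * π * (((p:ℤ) - (q:ℤ) : ℤ):ℝ) * x) + Real.cos (2 * π * (((p:ℤ) + (q:ℤ) : ℤ):ℝ) * x)) / 2 := by
    intro x
    push_cast
    rw [show (2*π*((p:ℝ) - q)*x) = 2*π*p*x - 2*π*q*x by ring,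
        show (2*π*((p:ℝ) + q)*x) = 2*π*p*x + 2*π*q*x by ring,
        Real.cos_sub, Real.cos_add]
    ring
  simp only [key]
  have i1 : IntervalIntegrable (fun x => Real.cos (2 * π * (((p:ℤ) - (q:ℤ) : ℤ):ℝ) * x)) volume 0 1 :=
    (Real.continuous_cos.comp (by continuity)).intervalIntegrable _ _
  have i2 : IntervalIntegrable (fun x => Real.cos (2 * π * (((p:ℤ) + (q:ℤ) : ℤ):ℝ) * x)) volume 0 1 :=
    (Real.continuous_cos.comp (by continuity)).intervalIntegrable _ _
  rw [intervalIntegral.integral_div, intervalIntegral.integral_add i1 i2,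
      integral_cos_int' ((p:ℤ) - q), integral_cos_int' ((p:ℤ) + q)]
  have hpq : ¬ ((p:ℤ) + q = 0) := by omega
  split_ifs with h1 h2 h3 <;> try omega
  · norm_num
  · norm_num
lemma l2_bound (b : ℕ → ℕ) (hb : Function.Injective b) (F : Finset ℕ)
    (hF : ∀ k ∈ F, 1 ≤ b k) :
    ∫ x in (0:ℝ)..1, (∑ k ∈ F, Real.cos (2 * π * (b k : ℝ) * x))^2 = (F.card : ℝ) / 2 := by
  have hcont : ∀ k : ℕ, Continuous (fun x : ℝ => Real.cos (2 * π * (b k : ℝ) * x)) :=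
    fun k => Real.continuous_cos.comp (by continuity)
  have expand : ∀ x : ℝ, (∑ k ∈ F, Real.cos (2 * π * (b k : ℝ) * x))^2
      = ∑ p ∈ F, ∑ q ∈ F, Real.cos (2 * π * (b p : ℝ) * x) * Real.cos (2 * π * (b q : ℝ) * x) := by
    intro x
    rw [sq, Finset.sum_mul_sum]
  simp only [expand]
  rw [intervalIntegral.integral_finset_sum
      (fun p (_ : p ∈ F) => Continuous.intervalIntegrable (by continuity) _ _)]
  have inner : ∀ p ∈ F, (∫ x in (0:ℝ)..1,
      ∑ q ∈ F, Real.cos (2 * π * (b p : ℝ) * x) * Real.cos (2 * π * (b q : ℝ) * x))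
      = ∑ q ∈ F, if p = q then (1:ℝ)/2 else 0 := by
    intro p hp
    rw [intervalIntegral.integral_finset_sum
      (fun q (_ : q ∈ F) => (show IntervalIntegrable (fun x => Real.cos (2 * π * (b p : ℝ) * x) * Real.cos (2 * π * (b q : ℝ) * x)) volume 0 1 from ((hcont p).mul (hcont q)).intervalIntegrable _ _))]
    refine Finset.sum_congr rfl fun q hq => ?_
    rw [integral_cos_mul_cos (b p) (b q) (hF p hp) (hF q hq)]
    simp [hb.eq_iff]
  rw [Finset.sum_congr rfl inner]
  have : ∀ p ∈ F, (∑ q ∈ F, if p = q then (1:ℝ)/2 else 0) = 1/2 := by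
    intro p hp
    rw [Finset.sum_ite_eq F p (fun _ => (1:ℝ)/2), if_pos hp]
  rw [Finset.sum_congr rfl this, Finset.sum_const]
  simp [div_eq_mul_inv, mul_comm]

noncomputable def blkSum (b : ℕ → ℕ) (j i : ℕ) (x : ℝ) : ℝ :=
  ∑ k ∈ Finset.Ioc (i * 2^j) ((i+1) * 2^j), Real.cos (2 * π * (b k : ℝ) * x)

noncomputable def wSum (b : ℕ → ℕ) (M j : ℕ) (x : ℝ) : ℝ :=
  ∑ i ∈ Finset.range (2^(M-j)), (blkSum b j i x)^2

lemma blk_le_sqrt (b : ℕ → ℕ) (M j i : ℕ) (x : ℝ) (hi : i < 2^(M-j)) :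
    |blkSum b j i x| ≤ Real.sqrt (wSum b M j x) := by
  rw [← Real.sqrt_sq_eq_abs]
  apply Real.sqrt_le_sqrt
  exact Finset.single_le_sum (f := fun i => (blkSum b j i x)^2)
    (fun i _ => sq_nonneg _) (Finset.mem_range.mpr hi)

lemma chain (b : ℕ → ℕ) (M : ℕ) : ∀ m, ∀ a N : ℕ, ∀ x : ℝ, N < 2^m → (a+1) * 2^m ≤ 2^M →
    |∑ k ∈ Finset.Ioc (a * 2^m) (a * 2^m + N), Real.cos (2 * π * (b k : ℝ) * x)|
      ≤ ∑ j ∈ Finset.range m, Real.sqrt (wSum b M j x) := by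
  intro m
  induction m with
  | zero =>
    intro a N x hN _
    interval_cases N
    simp
  | succ m IH =>
    intro a N x hN hle
    have hMm : m + 1 ≤ M := by
      have h1 : 2^(m+1) ≤ 2^M := le_trans (by nlinarith [Nat.zero_le a]) hle
      exact (Nat.pow_le_pow_iff_right (by norm_num)).mp h1
    by_cases h : N < 2^m
    · have key := IH (2*a) N x h (by
        rw [pow_succ] at hle
        calc (2*a+1) * 2^m ≤ ((a+1)*2) * 2^m := Nat.mul_le_mul_right _ (by omega)
        _ = (a+1) * (2^m*2) := by ring
        _ ≤ 2^M := hle)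
      rw [show (2*a) * 2^m = a * 2^(m+1) by rw [pow_succ]; ring] at key
      refine key.trans (Finset.sum_le_sum_of_subset_of_nonneg
        (Finset.range_subset_range.mpr (Nat.le_succ m)) (fun j _ _ => Real.sqrt_nonneg _))
    · push_neg at h
      have hsplit : (∑ k ∈ Finset.Ioc (a * 2^(m+1)) ((2*a+1) * 2^m), Real.cos (2 * π * (b k : ℝ) * x))
          + (∑ k ∈ Finset.Ioc ((2*a+1) * 2^m) (a * 2^(m+1) + N), Real.cos (2 * π * (b k : ℝ) * x))
          = ∑ k ∈ Finset.Ioc (a * 2^(m+1)) (a * 2^(m+1) + N), Real.cos (2 * π * (b k : ℝ) * x) := by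
        apply Finset.sum_Ioc_consecutive
        · rw [pow_succ, show a*(2^m*2) = (2*a)*2^m from by ring,
            show (2*a+1)*2^m = (2*a)*2^m + 2^m from by ring]
          omega
        · rw [pow_succ, show a*(2^m*2) = (2*a)*2^m from by ring,
            show (2*a+1)*2^m = (2*a)*2^m + 2^m from by ring]
          omega
      rw [← hsplit]
      have e1 : Finset.Ioc (a * 2^(m+1)) ((2*a+1) * 2^m) = Finset.Ioc ((2*a) * 2^m) ((2*a+1) * 2^m) := by
        rw [pow_succ]; ring_nf
      have h2a : 2*a < 2^(M-m) := by
        have : (2*a+2) * 2^m ≤ 2^(M-m) * 2^m := by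
          rw [← pow_add, Nat.sub_add_cancel (le_trans (Nat.le_succ m) hMm)]
          calc (2*a+2) * 2^m = (a+1) * 2^(m+1) := by rw [pow_succ]; ring
          _ ≤ 2^M := hle
        have := Nat.le_of_mul_le_mul_right this (Nat.pow_pos (by norm_num) : 0 < 2^m)
        omega
      have b1 : |∑ k ∈ Finset.Ioc (a * 2^(m+1)) ((2*a+1) * 2^m), Real.cos (2 * π * (b k : ℝ) * x)|
          ≤ Real.sqrt (wSum b M m x) := by
        rw [e1]
        exact blk_le_sqrt b M m (2*a) x h2a
      have e2 : a * 2^(m+1) + N = (2*a+1) * 2^m + (N - 2^m) := by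
        rw [pow_succ, show a*(2^m*2) = (2*a)*2^m from by ring,
          show (2*a+1)*2^m = (2*a)*2^m + 2^m from by ring]
        omega
      have b2 := IH (2*a+1) (N - 2^m) x (by omega)
        (by rw [show (2*a+1+1) * 2^m = (a+1) * 2^(m+1) by rw [pow_succ]; ring]; exact hle)
      rw [← e2] at b2
      calc _ ≤ _ := abs_add_le _ _
        _ ≤ Real.sqrt (wSum b M m x) + ∑ j ∈ Finset.range m, Real.sqrt (wSum b M j x) := by
            exact add_le_add b1 b2
        _ = ∑ j ∈ Finset.range (m+1), Real.sqrt (wSum b M j x) := by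
            rw [Finset.sum_range_succ]; ring
lemma cont_blk (b : ℕ → ℕ) (j i : ℕ) : Continuous (blkSum b j i) := by
  unfold blkSum
  exact continuous_finset_sum _ (fun k _ => Real.continuous_cos.comp (by continuity))

lemma cont_w (b : ℕ → ℕ) (M j : ℕ) : Continuous (wSum b M j) := by
  unfold wSum
  exact continuous_finset_sum _ (fun i _ => (cont_blk b j i).pow 2)

lemma intW (b : ℕ → ℕ) (hb : StrictMono b) (hbpos : ∀ k, 1 ≤ k → 0 < b k)
    (M j : ℕ) (hj : j ≤ M) :
    ∫ x in Set.Ioc (0:ℝ) 1, wSum b M j x ≤ (2:ℝ)^M := by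
  unfold wSum
  rw [MeasureTheory.integral_finset_sum _
    (fun i _ => (show IntegrableOn (fun x => (blkSum b j i x)^2) (Set.Ioc (0:ℝ) 1) volume from ((cont_blk b j i).pow 2).integrableOn_Ioc))]
  have each : ∀ i ∈ Finset.range (2^(M-j)),
      ∫ x in Set.Ioc (0:ℝ) 1, (blkSum b j i x)^2 = ((2:ℝ)^j) / 2 := by
    intro i _
    rw [← intervalIntegral.integral_of_le (by norm_num : (0:ℝ) ≤ 1)]
    unfold blkSum
    rw [l2_bound b hb.injective _ (fun k hk => hbpos k (by
      have := (Finset.mem_Ioc.mp hk).1; omega))]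
    rw [Nat.card_Ioc]
    rw [show (i+1) * 2^j - i * 2^j = 2^j from by
      rw [Nat.succ_mul, Nat.add_sub_cancel_left]]
    push_cast
    ring
  rw [Finset.sum_congr rfl each, Finset.sum_const, Finset.card_range, nsmul_eq_mul]
  have : ((2^(M-j) : ℕ) : ℝ) * ((2:ℝ)^j / 2) = (2:ℝ)^(M-j) * (2:ℝ)^j / 2 := by push_cast; ring
  rw [this, ← pow_add, Nat.sub_add_cancel hj]
  have h2 : (0:ℝ) < 2^M := by positivity
  linarith
noncomputable def thr (ε : ℝ) (M : ℕ) : ℝ :=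
  (2:ℝ)^((M:ℝ)*(1+2*ε)) / ((M:ℝ)+1)^2

lemma thr_pos (ε : ℝ) (M : ℕ) : 0 < thr ε M := by
  unfold thr
  have h1 : (0:ℝ) < (2:ℝ)^((M:ℝ)*(1+2*ε)) := Real.rpow_pos_of_pos (by norm_num) _
  have h2 : (0:ℝ) < ((M:ℝ)+1)^2 := by positivity
  positivity

lemma ae_event (b : ℕ → ℕ) (hb : StrictMono b) (hbpos : ∀ k, 1 ≤ k → 0 < b k)
    (ε : ℝ) (hε : 0 < ε) :
    ∀ᵐ x ∂(volume.restrict (Set.Ioc (0:ℝ) 1)), ∀ᶠ M in atTop,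
      ∀ j < M, wSum b M j x < thr ε M := by
  set μ := volume.restrict (Set.Ioc (0:ℝ) 1) with hμ
  haveI : IsFiniteMeasure μ := by
    constructor
    rw [hμ, Measure.restrict_apply_univ, Real.volume_Ioc]
    exact ENNReal.ofReal_lt_top
  set r : ℝ := (2:ℝ)^(-(2*ε)) with hr
  have hr0 : 0 < r := Real.rpow_pos_of_pos (by norm_num) _
  have hr1 : r < 1 := Real.rpow_lt_one_of_one_lt_of_neg (by norm_num) (by linarith)
  set A : ℕ → Set ℝ := fun M => {x | ∃ j < M, thr ε M ≤ wSum b M j x} with hA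
  -- measure bound for each event
  have meas_bound : ∀ M : ℕ, μ (A M) ≤ ENNReal.ofReal ((M:ℝ) * (((M:ℝ)+1)^2 * r^M)) := by
    intro M
    have hsub : A M ⊆ ⋃ j ∈ Finset.range M, {x | thr ε M ≤ wSum b M j x} := by
      intro x hx
      obtain ⟨j, hj, hle⟩ := hx
      exact Set.mem_biUnion (Finset.mem_range.mpr hj) hle
    refine (measure_mono hsub).trans ?_
    refine (measure_biUnion_finset_le _ _).trans ?_
    have each : ∀ j ∈ Finset.range M,
        μ {x | thr ε M ≤ wSum b M j x} ≤ ENNReal.ofReal (((M:ℝ)+1)^2 * r^M) := by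
      intro j hj
      have hjM : j ≤ M := le_of_lt (Finset.mem_range.mp hj)
      have hmar := mul_meas_ge_le_integral_of_nonneg (μ := μ)
        (f := wSum b M j)
        (ae_of_all _ fun x => Finset.sum_nonneg fun i _ => sq_nonneg _)
        ((cont_w b M j).integrableOn_Ioc) (thr ε M)
      have hint : ∫ x, wSum b M j x ∂μ ≤ (2:ℝ)^M := intW b hb hbpos M j hjM
      have hT := thr_pos ε M
      have key : (μ {x | thr ε M ≤ wSum b M j x}).toReal ≤ (2:ℝ)^M / thr ε M := by
        rw [le_div_iff₀ hT]
        calc (μ {x | thr ε M ≤ wSum b M j x}).toReal * thr ε M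
            = thr ε M * (μ {x | thr ε M ≤ wSum b M j x}).toReal := by ring
          _ ≤ ∫ x, wSum b M j x ∂μ := hmar
          _ ≤ (2:ℝ)^M := hint
      have hfin : μ {x | thr ε M ≤ wSum b M j x} ≠ ⊤ := measure_ne_top μ _
      have := ENNReal.ofReal_le_ofReal key
      rw [ENNReal.ofReal_toReal hfin] at this
      refine this.trans (ENNReal.ofReal_le_ofReal ?_)
      -- (2:ℝ)^M / thr ε M = (M+1)^2 * r^M
      have : (2:ℝ)^M / thr ε M = ((M:ℝ)+1)^2 * r^M := by
        have h2 : (0:ℝ) < (2:ℝ)^((M:ℝ)*(1+2*ε)) := Real.rpow_pos_of_pos (by norm_num) _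
        unfold thr
        rw [div_div_eq_mul_div, div_eq_iff (ne_of_gt h2), hr,
          ← Real.rpow_natCast ((2:ℝ)^(-(2*ε))) M, ← Real.rpow_mul (by norm_num : (0:ℝ) ≤ 2),
          ← Real.rpow_natCast (2:ℝ) M, mul_assoc, ← Real.rpow_add (by norm_num : (0:ℝ) < 2)]
        ring_nf
      rw [this]
    calc ∑ j ∈ Finset.range M, μ {x | thr ε M ≤ wSum b M j x}
        ≤ ∑ j ∈ Finset.range M, ENNReal.ofReal (((M:ℝ)+1)^2 * r^M) :=
          Finset.sum_le_sum each
      _ = M * ENNReal.ofReal (((M:ℝ)+1)^2 * r^M) := by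
          rw [Finset.sum_const, Finset.card_range, nsmul_eq_mul]
      _ = ENNReal.ofReal ((M:ℝ) * (((M:ℝ)+1)^2 * r^M)) := by
          rw [ENNReal.ofReal_mul (by positivity : (0:ℝ) ≤ (M:ℝ)), ENNReal.ofReal_natCast]
  -- summability
  have hsum : Summable (fun M : ℕ => (M:ℝ) * (((M:ℝ)+1)^2 * r^M)) := by
    have h3 : Summable (fun M : ℕ => ((M:ℝ)+1)^3 * r^M) := by
      have := summable_pow_mul_geometric_of_norm_lt_one 3
        (r := r) (by rw [Real.norm_eq_abs, abs_of_pos hr0]; exact hr1)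
      have h := (summable_nat_add_iff 1).mpr this
      have : (fun M : ℕ => ((M:ℝ)+1)^3 * r^M) = fun M : ℕ => (1/r) * ((↑(M+1))^3 * r^(M+1)) := by
        funext M
        push_cast
        field_simp
        ring
      rw [this]
      exact h.mul_left _
    refine Summable.of_nonneg_of_le (fun M => by positivity) (fun M => ?_) h3
    have : (M:ℝ) ≤ (M:ℝ)+1 := by linarith
    have hrM : (0:ℝ) ≤ r^M := by positivity
    nlinarith [sq_nonneg ((M:ℝ)+1), Nat.cast_nonneg (α := ℝ) M]
  have htsum : (∑' M, μ (A M)) ≠ ⊤ := by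
    refine ne_top_of_le_ne_top ?_ (ENNReal.tsum_le_tsum meas_bound)
    rw [← ENNReal.ofReal_tsum_of_nonneg (fun M => by positivity) hsum]
    exact ENNReal.ofReal_ne_top
  filter_upwards [ae_eventually_notMem htsum] with x hx
  filter_upwards [hx] with M hM
  intro j hj
  by_contra hcon
  push_neg at hcon
  exact hM ⟨j, hj, hcon⟩
lemma pointwise_bigO (b : ℕ → ℕ) (ε : ℝ) (hε : 0 < ε) (x : ℝ)
    (hx : ∀ᶠ M in atTop, ∀ j < M, wSum b M j x < thr ε M) :
    (fun N : ℕ => ∑ k ∈ Finset.Icc 1 N, Real.cos (2 * π * (b k : ℝ) * x))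
      =O[Filter.atTop] (fun N : ℕ => (N : ℝ) ^ ((1:ℝ)/2 + ε)) := by
  obtain ⟨M₀, hM₀⟩ := eventually_atTop.mp hx
  rw [isBigO_iff]
  refine ⟨(2:ℝ)^((1:ℝ)/2+ε), eventually_atTop.2 ⟨max (2^M₀) 1, fun N hN => ?_⟩⟩
  set M := Nat.log 2 N + 1 with hM
  have hN1 : 1 ≤ N := le_trans (le_max_right _ _) hN
  have hN0 : N ≠ 0 := by omega
  have hNM : N < 2^M := Nat.lt_pow_succ_log_self (by norm_num) N
  have hMM0 : M₀ ≤ M := by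
    have h1 : 2^M₀ ≤ N := le_trans (le_max_left _ _) hN
    have := (Nat.le_log_iff_pow_le (by norm_num) hN0).mpr h1
    omega
  have hchain := chain b M M 0 N x hNM (by simp)
  simp only [Nat.zero_mul, Nat.zero_add] at hchain
  have hIcc : Finset.Icc 1 N = Finset.Ioc 0 N := Finset.Icc_add_one_left_eq_Ioc 0 N
  have hW := hM₀ M hMM0
  have hsq : ∀ j ∈ Finset.range M, Real.sqrt (wSum b M j x) ≤ Real.sqrt (thr ε M) := fun j hj =>
    Real.sqrt_le_sqrt (le_of_lt (hW j (Finset.mem_range.mp hj)))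
  have h1 : |∑ k ∈ Finset.Ioc 0 N, Real.cos (2 * π * (b k : ℝ) * x)|
      ≤ (M : ℝ) * Real.sqrt (thr ε M) :=
    hchain.trans ((Finset.sum_le_sum hsq).trans
      (by rw [Finset.sum_const, Finset.card_range, nsmul_eq_mul]))
  have hsqthr : Real.sqrt (thr ε M) = (2:ℝ)^((M:ℝ)*((1:ℝ)/2+ε)) / ((M:ℝ)+1) := by
    unfold thr
    rw [Real.sqrt_div (Real.rpow_nonneg (by norm_num) _) _,
        Real.sqrt_sq (by positivity : (0:ℝ) ≤ (M:ℝ)+1),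
        Real.sqrt_eq_rpow, ← Real.rpow_mul (by norm_num : (0:ℝ) ≤ 2),
        show ((M:ℝ)*(1+2*ε))*(1/2) = (M:ℝ)*((1:ℝ)/2+ε) from by ring]
  have h2 : (M:ℝ) * Real.sqrt (thr ε M) ≤ (2:ℝ)^((M:ℝ)*((1:ℝ)/2+ε)) := by
    rw [hsqthr, mul_div_assoc']
    rw [div_le_iff₀ (by positivity : (0:ℝ) < (M:ℝ)+1)]
    have hpow : (0:ℝ) ≤ (2:ℝ)^((M:ℝ)*((1:ℝ)/2+ε)) := Real.rpow_nonneg (by norm_num) _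
    nlinarith [Nat.cast_nonneg (α := ℝ) M]
  have h3 : (2:ℝ)^((M:ℝ)*((1:ℝ)/2+ε)) ≤ (2:ℝ)^((1:ℝ)/2+ε) * (N:ℝ)^((1:ℝ)/2+ε) := by
    have h2M : ((2:ℝ))^(M:ℕ) ≤ 2*(N:ℝ) := by
      have hh : 2^M ≤ 2*N := by
        have := Nat.pow_log_le_self 2 hN0
        calc 2^M = 2 * 2^(Nat.log 2 N) := by rw [pow_succ]; ring
        _ ≤ 2*N := by omega
      exact_mod_cast hh
    have e1 : (2:ℝ)^((M:ℝ)*((1:ℝ)/2+ε)) = ((2:ℝ)^(M:ℕ))^((1:ℝ)/2+ε) := by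
      rw [← Real.rpow_natCast (2:ℝ) M, ← Real.rpow_mul (by norm_num : (0:ℝ) ≤ 2)]
    have e2 : ((2:ℝ)^(M:ℕ))^((1:ℝ)/2+ε) ≤ ((2:ℝ)*N)^((1:ℝ)/2+ε) :=
      Real.rpow_le_rpow (by positivity) h2M (by linarith)
    have e3 : ((2:ℝ)*N)^((1:ℝ)/2+ε) = (2:ℝ)^((1:ℝ)/2+ε) * (N:ℝ)^((1:ℝ)/2+ε) :=
      Real.mul_rpow (by norm_num) (Nat.cast_nonneg N)
    rw [e1, ← e3]
    exact e2
  rw [Real.norm_eq_abs, Real.norm_eq_abs,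
    abs_of_nonneg (Real.rpow_nonneg (Nat.cast_nonneg N) _), hIcc]
  exact h1.trans (h2.trans h3)

lemma periodize {P : ℝ → Prop} (hper : ∀ (x : ℝ) (n : ℤ), P x → P (x + n))
    (h : ∀ᵐ x ∂(volume.restrict (Set.Ioc (0:ℝ) 1)), P x) :
    ∀ᵐ x ∂(volume : Measure ℝ), P x := by
  rw [ae_iff] at h ⊢
  rw [Measure.restrict_apply' measurableSet_Ioc] at h
  have cover : {x | ¬ P x} ⊆ ⋃ n : ℤ, (fun y : ℝ => y - n) ⁻¹' ({x | ¬ P x} ∩ Set.Ioc 0 1) := by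
    intro x hx
    refine Set.mem_iUnion.mpr ⟨⌈x⌉ - 1, ?_, ?_⟩
    · intro hP
      apply hx
      have := hper _ (⌈x⌉ - 1) hP
      simpa using this
    · constructor
      · have := Int.ceil_lt_add_one x
        push_cast
        linarith
      · have := Int.le_ceil x
        push_cast
        linarith
  refine le_antisymm (le_trans (measure_mono cover) ?_) zero_le
  refine le_trans (measure_iUnion_le _) ?_
  have : ∀ n : ℤ, volume ((fun y : ℝ => y - (n:ℝ)) ⁻¹' ({x | ¬ P x} ∩ Set.Ioc 0 1)) = 0 := by
    intro n
    have : (fun y : ℝ => y - (n:ℝ)) = (fun y : ℝ => y + (-n : ℝ)) := by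
      funext y; ring
    rw [this, measure_preimage_add_right volume (-n : ℝ) _]
    exact h
  rw [tsum_congr this, tsum_zero]

/-- Almost-everywhere square-root cancellation: for a strictly increasing sequence of positive
integers `(b_k)` and any `ε > 0`, for almost every `x` one has
`∑_{k=1}^N cos(2π b_k x) = O(N^{1/2+ε})` as `N → ∞`. -/
theorem cos_sum_sqrt_cancellation
    (b : ℕ → ℕ) (hb : StrictMono b) (hbpos : ∀ k, 1 ≤ k → 0 < b k)
    (ε : ℝ) (hε : 0 < ε) :
    ∀ᵐ x ∂(volume : Measure ℝ),
      (fun N : ℕ => ∑ k ∈ Finset.Icc 1 N, Real.cos (2 * π * (b k : ℝ) * x))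
        =O[Filter.atTop] (fun N : ℕ => (N : ℝ) ^ ((1:ℝ)/2 + ε)) := by
  have hres : ∀ᵐ x ∂(volume.restrict (Set.Ioc (0:ℝ) 1)),
      (fun N : ℕ => ∑ k ∈ Finset.Icc 1 N, Real.cos (2 * π * (b k : ℝ) * x))
        =O[Filter.atTop] (fun N : ℕ => (N : ℝ) ^ ((1:ℝ)/2 + ε)) := by
    filter_upwards [ae_event b hb hbpos ε hε] with x hx
    exact pointwise_bigO b ε hε x hx
  refine periodize ?_ hres
  intro x n hP
  have heq : ∀ N : ℕ, (∑ k ∈ Finset.Icc 1 N, Real.cos (2 * π * (b k : ℝ) * (x + (n:ℝ))))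
      = ∑ k ∈ Finset.Icc 1 N, Real.cos (2 * π * (b k : ℝ) * x) := by
    intro N
    refine Finset.sum_congr rfl fun k _ => ?_
    rw [show 2*π*(b k : ℝ)*(x + (n:ℝ))
        = 2*π*(b k : ℝ)*x + (((b k : ℤ)*n : ℤ) : ℝ)*(2*π) from by push_cast; ring]
    exact Real.cos_add_int_mul_two_pi _ _
  have : (fun N : ℕ => ∑ k ∈ Finset.Icc 1 N, Real.cos (2 * π * (b k : ℝ) * (x + (n:ℝ))))
      = (fun N : ℕ => ∑ k ∈ Finset.Icc 1 N, Real.cos (2 * π * (b k : ℝ) * x)) := funext heq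
  rw [this]
  exact hP
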